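/- The conditions max(|p_0−p_1|, |p_2−p_3|) + max(|p_0−p_2|, |p_1−p_3|) < 1 and 0 < min(p_0,p_3) ≤ min(p_1,p_2) ≤ max(p_1,p_2) ≤ max(p_0,p_3) < 1, restricted to the slice p_1 = p_2, define subsets of the (p_0,p_1,p_3) unit cube (0,1)^3 of Lebesgue measure 7/12 and 1/3, respectively. -/

import Mathlib

open MeasureTheory

namespace Stmt19Aux

/-- Slice interval in the `p₀` (or `p₃`) direction for the first condition. -/
def A (t : ℝ) : Set ℝ := Set.Ioo 0 1 ∩ Set.Ioo (t - 1/2) (t + 1/2)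

lemma measA (t : ℝ) : MeasurableSet (A t) :=
  measurableSet_Ioo.inter measurableSet_Ioo

lemma volA (t : ℝ) :
    volume (A t) = ENNReal.ofReal (min 1 (t + 1/2) - max 0 (t - 1/2)) := by
  rw [A, Set.Ioo_inter_Ioo, Real.volume_Ioo]

lemma contF : Continuous (fun t : ℝ => min 1 (t + 1/2) - max 0 (t - 1/2)) :=
  (continuous_const.min (continuous_id.add continuous_const)).sub
    (continuous_const.max (continuous_id.sub continuous_const))

lemma lint01 {g : ℝ → ℝ} (hc : Continuous g) (hg : ∀ t, 0 ≤ g t) :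
    ∫⁻ t in Set.Ioo (0:ℝ) 1, ENNReal.ofReal (g t) = ENNReal.ofReal (∫ t in (0:ℝ)..1, g t) := by
  rw [Measure.restrict_congr_set Ioo_ae_eq_Ioc,
      intervalIntegral.integral_of_le (by norm_num : (0:ℝ) ≤ 1),
      ← ofReal_integral_eq_lintegral_ofReal hc.integrableOn_Ioc (ae_of_all _ hg)]

lemma integralF :
    ∫ t in (0:ℝ)..1, (min 1 (t + 1/2) - max 0 (t - 1/2)) * (min 1 (t + 1/2) - max 0 (t - 1/2))
      = 7/12 := by
  have hi1 : IntervalIntegrable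
      (fun t : ℝ => (min 1 (t + 1/2) - max 0 (t - 1/2)) * (min 1 (t + 1/2) - max 0 (t - 1/2)))
      volume 0 (1/2) := (contF.mul contF).intervalIntegrable _ _
  have hi2 : IntervalIntegrable
      (fun t : ℝ => (min 1 (t + 1/2) - max 0 (t - 1/2)) * (min 1 (t + 1/2) - max 0 (t - 1/2)))
      volume (1/2) 1 := (contF.mul contF).intervalIntegrable _ _
  rw [← intervalIntegral.integral_add_adjacent_intervals hi1 hi2]
  have e1 : ∫ t in (0:ℝ)..(1/2:ℝ),
      (min 1 (t + 1/2) - max 0 (t - 1/2)) * (min 1 (t + 1/2) - max 0 (t - 1/2))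
        = ∫ t in (0:ℝ)..(1/2:ℝ), (t + 1/2)^2 := by
    apply intervalIntegral.integral_congr
    intro t ht
    rw [Set.uIcc_of_le (by norm_num : (0:ℝ) ≤ 1/2), Set.mem_Icc] at ht
    obtain ⟨ht1, ht2⟩ := ht
    dsimp only
    rw [min_eq_right (by linarith), max_eq_left (by linarith)]
    ring
  have e2 : ∫ t in (1/2:ℝ)..(1:ℝ),
      (min 1 (t + 1/2) - max 0 (t - 1/2)) * (min 1 (t + 1/2) - max 0 (t - 1/2))
        = ∫ t in (1/2:ℝ)..(1:ℝ), (3/2 - t)^2 := by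
    apply intervalIntegral.integral_congr
    intro t ht
    rw [Set.uIcc_of_le (by norm_num : (1/2:ℝ) ≤ 1), Set.mem_Icc] at ht
    obtain ⟨ht1, ht2⟩ := ht
    dsimp only
    rw [min_eq_left (by linarith), max_eq_right (by linarith)]
    ring
  rw [e1, e2, intervalIntegral.integral_comp_add_right (fun x => x^2) (1/2),
      intervalIntegral.integral_comp_sub_left (fun x => x^2) (3/2), integral_pow, integral_pow]
  norm_num

lemma integralAbs {c : ℝ} (h0 : 0 < c) (h1 : c < 1) :
    ∫ x in (0:ℝ)..1, |x - c| = c^2 - c + 1/2 := by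
  have hi1 : IntervalIntegrable (fun x : ℝ => |x - c|) volume 0 c :=
    ((continuous_id.sub continuous_const).abs).intervalIntegrable _ _
  have hi2 : IntervalIntegrable (fun x : ℝ => |x - c|) volume c 1 :=
    ((continuous_id.sub continuous_const).abs).intervalIntegrable _ _
  rw [← intervalIntegral.integral_add_adjacent_intervals hi1 hi2]
  have e1 : ∫ x in (0:ℝ)..c, |x - c| = ∫ x in (0:ℝ)..c, (c - x) := by
    apply intervalIntegral.integral_congr
    intro x hx
    rw [Set.uIcc_of_le (le_of_lt h0), Set.mem_Icc] at hx
    obtain ⟨hx1, hx2⟩ := hx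
    dsimp only
    rw [abs_of_nonpos (by linarith), neg_sub]
  have e2 : ∫ x in c..(1:ℝ), |x - c| = ∫ x in c..(1:ℝ), (x - c) := by
    apply intervalIntegral.integral_congr
    intro x hx
    rw [Set.uIcc_of_le (le_of_lt h1), Set.mem_Icc] at hx
    obtain ⟨hx1, hx2⟩ := hx
    dsimp only
    rw [abs_of_nonneg (by linarith)]
  rw [e1, e2,
      intervalIntegral.integral_sub intervalIntegrable_const
        intervalIntegral.intervalIntegrable_id,
      intervalIntegral.integral_sub intervalIntegral.intervalIntegrable_id
        intervalIntegrable_const,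
      intervalIntegral.integral_const, intervalIntegral.integral_const,
      integral_id, integral_id]
  simp only [smul_eq_mul]
  ring

end Stmt19Aux

open Stmt19Aux

/-- In the `(p_0,p_1,p_3)` unit cube `(0,1)^3` (slice `p_1 = p_2`), the
ergodicity condition `max(|p_0−p_1|, |p_2−p_3|) + max(|p_0−p_2|, |p_1−p_3|) < 1` defines
a set of Lebesgue measure `7/12`, and the condition
`0 < min(p_0,p_3) ≤ min(p_1,p_2) ≤ max(p_1,p_2) ≤ max(p_0,p_3) < 1` defines a set of
Lebesgue measure `1/3`.  (Coordinates: `v = (p_0, p_1, p_3)` with `p_2 = p_1`.) -/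
theorem stmt_19 :
    volume {v : ℝ × ℝ × ℝ |
        (v.1 ∈ Set.Ioo (0 : ℝ) 1 ∧ v.2.1 ∈ Set.Ioo (0 : ℝ) 1 ∧
          v.2.2 ∈ Set.Ioo (0 : ℝ) 1) ∧
        max |v.1 - v.2.1| |v.2.1 - v.2.2| + max |v.1 - v.2.1| |v.2.1 - v.2.2| < 1} =
      ENNReal.ofReal (7 / 12) ∧
    volume {v : ℝ × ℝ × ℝ |
        (v.1 ∈ Set.Ioo (0 : ℝ) 1 ∧ v.2.1 ∈ Set.Ioo (0 : ℝ) 1 ∧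
          v.2.2 ∈ Set.Ioo (0 : ℝ) 1) ∧
        0 < min v.1 v.2.2 ∧ min v.1 v.2.2 ≤ v.2.1 ∧ v.2.1 ≤ max v.1 v.2.2 ∧
          max v.1 v.2.2 < 1} =
      ENNReal.ofReal (1 / 3) := by
  constructor
  · -- Part 1
    have hset : {v : ℝ × ℝ × ℝ |
        (v.1 ∈ Set.Ioo (0 : ℝ) 1 ∧ v.2.1 ∈ Set.Ioo (0 : ℝ) 1 ∧
          v.2.2 ∈ Set.Ioo (0 : ℝ) 1) ∧
        max |v.1 - v.2.1| |v.2.1 - v.2.2| + max |v.1 - v.2.1| |v.2.1 - v.2.2| < 1}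
        = {v : ℝ × ℝ × ℝ | v.2.1 ∈ Set.Ioo (0:ℝ) 1 ∧ v.1 ∈ A v.2.1 ∧ v.2.2 ∈ A v.2.1} := by
      ext ⟨p0, p1, p3⟩
      simp only [Set.mem_setOf_eq, A, Set.mem_inter_iff, Set.mem_Ioo]
      constructor
      · rintro ⟨⟨⟨h0a, h0b⟩, ⟨h1a, h1b⟩, ⟨h3a, h3b⟩⟩, hm⟩
        have hM : max |p0 - p1| |p1 - p3| < 1/2 := by linarith
        have ha : |p0 - p1| < 1/2 := lt_of_le_of_lt (le_max_left _ _) hM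
        have hb : |p1 - p3| < 1/2 := lt_of_le_of_lt (le_max_right _ _) hM
        rw [abs_lt] at ha hb
        exact ⟨⟨h1a, h1b⟩, ⟨⟨h0a, h0b⟩, by constructor <;> linarith⟩,
          ⟨⟨h3a, h3b⟩, by constructor <;> linarith⟩⟩
      · rintro ⟨⟨h1a, h1b⟩, ⟨⟨h0a, h0b⟩, ⟨ha1, ha2⟩⟩, ⟨⟨h3a, h3b⟩, ⟨hb1, hb2⟩⟩⟩
        have ha : |p0 - p1| < 1/2 := abs_lt.mpr ⟨by linarith, by linarith⟩
        have hb : |p1 - p3| < 1/2 := abs_lt.mpr ⟨by linarith, by linarith⟩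
        have hM := max_lt ha hb
        exact ⟨⟨⟨h0a, h0b⟩, ⟨h1a, h1b⟩, ⟨h3a, h3b⟩⟩, by linarith⟩
    rw [hset]
    set T : Set (ℝ × ℝ × ℝ) :=
      {v : ℝ × ℝ × ℝ | v.2.1 ∈ Set.Ioo (0:ℝ) 1 ∧ v.1 ∈ A v.2.1 ∧ v.2.2 ∈ A v.2.1} with hTdef
    have hT : MeasurableSet T := by
      rw [hTdef]
      simp only [A, Set.mem_inter_iff, Set.mem_Ioo, Set.setOf_and]
      repeat' apply MeasurableSet.inter
      all_goals first
        | exact measurableSet_lt measurable_const (measurable_snd.fst)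
        | exact measurableSet_lt (measurable_snd.fst) measurable_const
        | exact measurableSet_lt measurable_const measurable_fst
        | exact measurableSet_lt measurable_fst measurable_const
        | exact measurableSet_lt measurable_const (measurable_snd.snd)
        | exact measurableSet_lt (measurable_snd.snd) measurable_const
        | exact measurableSet_lt ((measurable_snd.fst).sub measurable_const) measurable_fst
        | exact measurableSet_lt measurable_fst ((measurable_snd.fst).add measurable_const)
        | exact measurableSet_lt ((measurable_snd.fst).sub measurable_const) (measurable_snd.snd)
        | exact measurableSet_lt (measurable_snd.snd) ((measurable_snd.fst).add measurable_const)
    set T' : Set (ℝ × ℝ) := {y : ℝ × ℝ | y.1 ∈ Set.Ioo (0:ℝ) 1 ∧ y.2 ∈ A y.1} with hT'def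
    have hT' : MeasurableSet T' := by
      rw [hT'def]
      simp only [A, Set.mem_inter_iff, Set.mem_Ioo, Set.setOf_and]
      repeat' apply MeasurableSet.inter
      all_goals first
        | exact measurableSet_lt measurable_const measurable_fst
        | exact measurableSet_lt measurable_fst measurable_const
        | exact measurableSet_lt measurable_const measurable_snd
        | exact measurableSet_lt measurable_snd measurable_const
        | exact measurableSet_lt (measurable_fst.sub measurable_const) measurable_snd
        | exact measurableSet_lt measurable_snd (measurable_fst.add measurable_const)
    rw [Measure.volume_eq_prod, Measure.prod_apply_symm hT]
    have hvol : ∀ y : ℝ × ℝ, volume ((fun x => (x, y)) ⁻¹' T) =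
        T'.indicator (fun y => volume (A y.1)) y := by
      intro y
      by_cases hy : y ∈ T'
      · rw [Set.indicator_of_mem hy]
        congr 1
        ext x
        simp only [Set.mem_preimage, hTdef, Set.mem_setOf_eq]
        rw [hT'def] at hy
        simp only [Set.mem_setOf_eq] at hy
        exact ⟨fun h => h.2.1, fun h => ⟨hy.1, h, hy.2⟩⟩
      · rw [Set.indicator_of_notMem hy]
        have : ((fun x => (x, y)) ⁻¹' T) = ∅ := by
          ext x
          simp only [Set.mem_preimage, hTdef, Set.mem_setOf_eq, Set.mem_empty_iff_false,
            iff_false]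
          rw [hT'def] at hy
          simp only [Set.mem_setOf_eq] at hy
          exact fun h => hy ⟨h.1, h.2.2⟩
        rw [this, measure_empty]
    simp_rw [hvol, volA]
    have hmeas : Measurable (T'.indicator
        (fun y : ℝ × ℝ => ENNReal.ofReal (min 1 (y.1 + 1/2) - max 0 (y.1 - 1/2)))) :=
      (ENNReal.measurable_ofReal.comp (contF.comp continuous_fst).measurable).indicator hT'
    rw [Measure.volume_eq_prod, lintegral_prod _ hmeas.aemeasurable]
    have hpt : ∀ p1 p3 : ℝ, T'.indicator
        (fun y : ℝ × ℝ => ENNReal.ofReal (min 1 (y.1 + 1/2) - max 0 (y.1 - 1/2))) (p1, p3) =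
        (Set.Ioo (0:ℝ) 1).indicator
          (fun t => ENNReal.ofReal (min 1 (t + 1/2) - max 0 (t - 1/2))) p1
          * (A p1).indicator 1 p3 := by
      intro p1 p3
      by_cases h1 : p1 ∈ Set.Ioo (0:ℝ) 1
      · by_cases h3 : p3 ∈ A p1
        · have hmem : (p1, p3) ∈ T' := by rw [hT'def]; exact ⟨h1, h3⟩
          rw [Set.indicator_of_mem hmem, Set.indicator_of_mem h1, Set.indicator_of_mem h3]
          simp
        · have hmem : (p1, p3) ∉ T' := by rw [hT'def]; exact fun h => h3 h.2
          rw [Set.indicator_of_notMem hmem, Set.indicator_of_notMem h3, mul_zero]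
      · have hmem : (p1, p3) ∉ T' := by rw [hT'def]; exact fun h => h1 h.1
        rw [Set.indicator_of_notMem hmem, Set.indicator_of_notMem h1, zero_mul]
    simp_rw [hpt]
    have hinner : ∀ p1 : ℝ, (∫⁻ p3, (Set.Ioo (0:ℝ) 1).indicator
        (fun t => ENNReal.ofReal (min 1 (t + 1/2) - max 0 (t - 1/2))) p1
          * (A p1).indicator 1 p3)
        = (Set.Ioo (0:ℝ) 1).indicator
          (fun t => ENNReal.ofReal (min 1 (t + 1/2) - max 0 (t - 1/2))
            * ENNReal.ofReal (min 1 (t + 1/2) - max 0 (t - 1/2))) p1 := by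
      intro p1
      rw [lintegral_const_mul _ (measurable_one.indicator (measA p1)),
        lintegral_indicator_one (measA p1), volA]
      by_cases h1 : p1 ∈ Set.Ioo (0:ℝ) 1 <;> simp [h1]
    simp_rw [hinner]
    rw [lintegral_indicator measurableSet_Ioo]
    rw [setLIntegral_congr_fun measurableSet_Ioo (fun t ht => by
      have hnn : 0 ≤ min 1 (t + 1/2) - max 0 (t - 1/2) := by
        rw [Set.mem_Ioo] at ht
        rw [sub_nonneg]
        apply max_le
        · apply le_min <;> linarith [ht.1, ht.2]
        · apply le_min <;> linarith [ht.1, ht.2]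
      exact (ENNReal.ofReal_mul hnn).symm)]
    rw [lint01 (g := fun t => (min 1 (t + 1/2) - max 0 (t - 1/2)) * (min 1 (t + 1/2) - max 0 (t - 1/2))) (contF.mul contF) (fun t => mul_self_nonneg _), integralF]
  · -- Part 2
    have hset : {v : ℝ × ℝ × ℝ |
        (v.1 ∈ Set.Ioo (0 : ℝ) 1 ∧ v.2.1 ∈ Set.Ioo (0 : ℝ) 1 ∧
          v.2.2 ∈ Set.Ioo (0 : ℝ) 1) ∧
        0 < min v.1 v.2.2 ∧ min v.1 v.2.2 ≤ v.2.1 ∧ v.2.1 ≤ max v.1 v.2.2 ∧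
          max v.1 v.2.2 < 1}
        = {v : ℝ × ℝ × ℝ | v.1 ∈ Set.Ioo (0:ℝ) 1 ∧ v.2.2 ∈ Set.Ioo (0:ℝ) 1 ∧
            v.2.1 ∈ Set.Icc (min v.1 v.2.2) (max v.1 v.2.2)} := by
      ext ⟨p0, p1, p3⟩
      simp only [Set.mem_setOf_eq, Set.mem_Ioo, Set.mem_Icc]
      constructor
      · rintro ⟨⟨⟨h0a, h0b⟩, _, ⟨h3a, h3b⟩⟩, _, hmin, hmax, _⟩
        exact ⟨⟨h0a, h0b⟩, ⟨h3a, h3b⟩, hmin, hmax⟩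
      · rintro ⟨⟨h0a, h0b⟩, ⟨h3a, h3b⟩, hmin, hmax⟩
        refine ⟨⟨⟨h0a, h0b⟩, ⟨?_, ?_⟩, ⟨h3a, h3b⟩⟩, lt_min h0a h3a, hmin, hmax,
          max_lt h0b h3b⟩
        · exact lt_of_lt_of_le (lt_min h0a h3a) hmin
        · exact lt_of_le_of_lt hmax (max_lt h0b h3b)
    rw [hset]
    set T : Set (ℝ × ℝ × ℝ) := {v : ℝ × ℝ × ℝ | v.1 ∈ Set.Ioo (0:ℝ) 1 ∧
        v.2.2 ∈ Set.Ioo (0:ℝ) 1 ∧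
        v.2.1 ∈ Set.Icc (min v.1 v.2.2) (max v.1 v.2.2)} with hTdef
    have hT : MeasurableSet T := by
      rw [hTdef]
      simp only [Set.mem_Ioo, Set.mem_Icc, Set.setOf_and]
      repeat' apply MeasurableSet.inter
      all_goals first
        | exact measurableSet_lt measurable_const measurable_fst
        | exact measurableSet_lt measurable_fst measurable_const
        | exact measurableSet_lt measurable_const (measurable_snd.snd)
        | exact measurableSet_lt (measurable_snd.snd) measurable_const
        | exact measurableSet_le (measurable_fst.min (measurable_snd.snd)) (measurable_snd.fst)
        | exact measurableSet_le (measurable_snd.fst) (measurable_fst.max (measurable_snd.snd))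
    rw [Measure.volume_eq_prod, Measure.prod_apply hT]
    have hvol2 : ∀ p0 : ℝ, (volume : Measure (ℝ × ℝ)) (Prod.mk p0 ⁻¹' T) =
        (Set.Ioo (0:ℝ) 1).indicator (fun c => ENNReal.ofReal (c^2 - c + 1/2)) p0 := by
      intro p0
      rw [Measure.volume_eq_prod,
        Measure.prod_apply_symm (measurable_prodMk_left hT)]
      have hsl : ∀ p3 : ℝ, ((fun p1 => (p1, p3)) ⁻¹' (Prod.mk p0 ⁻¹' T)) =
          if p0 ∈ Set.Ioo (0:ℝ) 1 ∧ p3 ∈ Set.Ioo (0:ℝ) 1 then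
            Set.Icc (min p0 p3) (max p0 p3) else ∅ := by
        intro p3
        split_ifs with h
        · ext p1
          simp only [Set.mem_preimage, hTdef, Set.mem_setOf_eq]
          exact ⟨fun hh => hh.2.2, fun hh => ⟨h.1, h.2, hh⟩⟩
        · ext p1
          simp only [Set.mem_preimage, hTdef, Set.mem_setOf_eq, Set.mem_empty_iff_false,
            iff_false]
          exact fun hh => h ⟨hh.1, hh.2.1⟩
      simp_rw [hsl]
      by_cases hp0 : p0 ∈ Set.Ioo (0:ℝ) 1
      · rw [Set.indicator_of_mem hp0]
        have hin : ∀ p3 : ℝ, volume (if p0 ∈ Set.Ioo (0:ℝ) 1 ∧ p3 ∈ Set.Ioo (0:ℝ) 1 then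
            Set.Icc (min p0 p3) (max p0 p3) else ∅)
            = (Set.Ioo (0:ℝ) 1).indicator (fun p3 => ENNReal.ofReal |p3 - p0|) p3 := by
          intro p3
          by_cases hp3 : p3 ∈ Set.Ioo (0:ℝ) 1
          · rw [if_pos ⟨hp0, hp3⟩, Set.indicator_of_mem hp3, Real.volume_Icc,
              max_sub_min_eq_abs]
          · rw [if_neg (fun hh => hp3 hh.2), Set.indicator_of_notMem hp3, measure_empty]
        simp_rw [hin]
        rw [lintegral_indicator measurableSet_Ioo,
          lint01 (g := fun x => |x - p0|) ((continuous_sub_right p0).abs)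
            (fun t => abs_nonneg _)]
        rw [Set.mem_Ioo] at hp0
        congr 1
        exact integralAbs hp0.1 hp0.2
      · rw [Set.indicator_of_notMem hp0]
        have hin : ∀ p3 : ℝ, (if p0 ∈ Set.Ioo (0:ℝ) 1 ∧ p3 ∈ Set.Ioo (0:ℝ) 1 then
            Set.Icc (min p0 p3) (max p0 p3) else ∅) = (∅ : Set ℝ) :=
          fun p3 => if_neg (fun hh => hp0 hh.1)
        simp_rw [hin]
        simp
    simp_rw [hvol2]
    rw [lintegral_indicator measurableSet_Ioo,
      lint01 (g := fun t => t^2 - t + 1/2)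
        (((continuous_pow 2).sub continuous_id).add continuous_const)
        (fun t => by nlinarith [sq_nonneg (t - 1/2)])]
    have : ∫ t in (0:ℝ)..1, (t^2 - t + 1/2) = 1/3 := by
      rw [intervalIntegral.integral_add
          ((intervalIntegral.intervalIntegrable_pow 2).sub
            intervalIntegral.intervalIntegrable_id)
          intervalIntegrable_const,
        intervalIntegral.integral_sub (intervalIntegral.intervalIntegrable_pow 2)
          intervalIntegral.intervalIntegrable_id,
        integral_pow, integral_id, intervalIntegral.integral_const]
      norm_num
    rw [this]
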